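/- For every n ≥ 0, the map ψ : SYT(θ^(n)) → P_n, defined by ψ(T) = p_1 p_2 … p_{2n+2} with p_i = E if the entry i+2 of T lies in the arm, p_i = N if i+2 lies in the leg, p_i = S if i+2 lies in the heart and 2 lies in the arm, and p_i = W if i+2 lies in the heart and 2 lies in the leg, is a bijection from SYT(θ^(n)) onto P_n. -/

import Mathlib

/-- The four unit steps of a lattice path. -/
inductive Step : Type
  | N | S | E | W
  deriving DecidableEq

/-- The vector in `ℤ × ℤ` corresponding to a step. -/
def stepVec : Step → ℤ × ℤ
  | Step.N => (0, 1)
  | Step.S => (0, -1)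
  | Step.E => (1, 0)
  | Step.W => (-1, 0)

/-- The endpoint of the lattice path described by the word `w`, starting at the origin. -/
def endpt (w : List Step) : ℤ × ℤ := (w.map stepVec).sum

/-- `w` is a lattice path in `𝒫ₙ`: it has length `2n+2`, stays weakly in the first
quadrant, and ends at `(n, n)`. -/
def IsPath (n : ℕ) (w : List Step) : Prop :=
  w.length = 2 * n + 2 ∧
  (∀ k : ℕ, 0 ≤ (endpt (w.take k)).1 ∧ 0 ≤ (endpt (w.take k)).2) ∧
  endpt w = ((n : ℤ), (n : ℤ))

/-- The cells of the Young diagram of `θ⁽ⁿ⁾ = (n+2, 2, 1ⁿ)`, in (row, column) matrix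
coordinates, 0-indexed, English orientation. -/
def cells (n : ℕ) : Set (ℕ × ℕ) :=
  {c | (c.1 = 0 ∧ c.2 ≤ n + 1) ∨ c = (1, 1) ∨ (c.2 = 0 ∧ 1 ≤ c.1 ∧ c.1 ≤ n + 1)}

/-- `T` is a standard Young tableau of shape `θ⁽ⁿ⁾`: it is a bijective filling of the
cells with `1, …, 2n+4` (and `0` elsewhere), strictly increasing along rows and
down columns. -/
def IsSYT (n : ℕ) (T : ℕ × ℕ → ℕ) : Prop :=
  (∀ c, c ∉ cells n → T c = 0) ∧
  Set.BijOn T (cells n) (Set.Icc 1 (2 * n + 4)) ∧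
  (∀ c ∈ cells n, ∀ d ∈ cells n, c.1 = d.1 → c.2 < d.2 → T c < T d) ∧
  (∀ c ∈ cells n, ∀ d ∈ cells n, c.2 = d.2 → c.1 < d.1 → T c < T d)

/-- The value `m` appears in the arm (first row) of `T`. -/
def InArm (n : ℕ) (T : ℕ × ℕ → ℕ) (m : ℕ) : Prop := ∃ j ≤ n + 1, T (0, j) = m

/-- The value `m` appears in the leg (first column) of `T`. -/
def InLeg (n : ℕ) (T : ℕ × ℕ → ℕ) (m : ℕ) : Prop := ∃ i ≤ n + 1, T (i, 0) = m

/-- The value `m` appears in the heart (the cell `(1,1)`) of `T`. -/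
def InHeart (T : ℕ × ℕ → ℕ) (m : ℕ) : Prop := T (1, 1) = m

open Classical in
/-- The map ψ: the `i`-th letter (1-based, `i = k+1` for `k : Fin (2n+2)`) is determined by
the position of the entry `i+2` of `T`, and, if `i+2` is in the heart, by the position of `2`. -/
noncomputable def psi (n : ℕ) (T : ℕ × ℕ → ℕ) : List Step :=
  List.ofFn (fun k : Fin (2 * n + 2) =>
    if InArm n T (k.val + 3) then Step.E
    else if InLeg n T (k.val + 3) then Step.N
    else if InHeart T (k.val + 3) ∧ InArm n T 2 then Step.S
    else Step.W)

lemma endpt_nil : endpt [] = (0, 0) := rfl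

lemma endpt_append (u v : List Step) : endpt (u ++ v) = endpt u + endpt v := by
  simp [endpt]

lemma endpt_fst (w : List Step) :
    (endpt w).1 = (w.count Step.E : ℤ) - (w.count Step.W : ℤ) := by
  induction w with
  | nil => rfl
  | cons a l ih =>
    have : endpt (a :: l) = stepVec a + endpt l := by simp [endpt]
    rw [this]
    cases a <;> simp [List.count_cons, ih, stepVec] <;> push_cast <;> ring

lemma endpt_snd (w : List Step) :
    (endpt w).2 = (w.count Step.N : ℤ) - (w.count Step.S : ℤ) := by
  induction w with
  | nil => rfl
  | cons a l ih =>
    have : endpt (a :: l) = stepVec a + endpt l := by simp [endpt]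
    rw [this]
    cases a <;> simp [List.count_cons, ih, stepVec] <;> push_cast <;> ring

lemma counts_sum (w : List Step) :
    w.count Step.E + w.count Step.N + w.count Step.S + w.count Step.W = w.length := by
  induction w with
  | nil => rfl
  | cons a l ih => cases a <;> simp [List.count_cons] <;> omega

/-- Counting facts for a path. -/
lemma path_counts {n : ℕ} {w : List Step} (hw : IsPath n w) :
    w.count Step.E = n + w.count Step.W ∧ w.count Step.N = n + w.count Step.S ∧
    w.count Step.S + w.count Step.W = 1 := by
  obtain ⟨hlen, -, hend⟩ := hw
  have h1 := endpt_fst w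
  have h2 := endpt_snd w
  rw [hend] at h1 h2
  have h3 := counts_sum w
  rw [hlen] at h3
  constructor
  · omega
  constructor
  · omega
  · omega

section SYT
variable {n : ℕ} {T : ℕ × ℕ → ℕ}

lemma arm_mem_cells {j : ℕ} (hj : j ≤ n + 1) : ((0, j) : ℕ × ℕ) ∈ cells n := Or.inl ⟨rfl, hj⟩
lemma heart_mem_cells : ((1, 1) : ℕ × ℕ) ∈ cells n := Or.inr (Or.inl rfl)
lemma leg_mem_cells {i : ℕ} (h1 : 1 ≤ i) (hi : i ≤ n + 1) : ((i, 0) : ℕ × ℕ) ∈ cells n :=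
  Or.inr (Or.inr ⟨rfl, h1, hi⟩)

variable (hT : IsSYT n T)
include hT

lemma row0_lt {j j' : ℕ} (hj' : j' ≤ n + 1) (h : j < j') : T (0, j) < T (0, j') :=
  hT.2.2.1 _ (arm_mem_cells (le_trans (le_of_lt h) hj')) _ (arm_mem_cells hj') rfl h

lemma col0_lt {i i' : ℕ} (hi' : i' ≤ n + 1) (h : i < i') : T (i, 0) < T (i', 0) := by
  rcases Nat.eq_zero_or_pos i with rfl | hpos
  · exact hT.2.2.2 _ (arm_mem_cells (by omega)) _ (leg_mem_cells h hi') rfl h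
  · exact hT.2.2.2 _ (leg_mem_cells hpos (le_trans (le_of_lt h) hi')) _ (leg_mem_cells (by omega) hi') rfl h

lemma T01_lt_heart : T (0, 1) < T (1, 1) :=
  hT.2.2.2 _ (arm_mem_cells (by omega)) _ heart_mem_cells rfl Nat.zero_lt_one

lemma T10_lt_heart : T (1, 0) < T (1, 1) :=
  hT.2.2.1 _ (leg_mem_cells le_rfl (by omega)) _ heart_mem_cells rfl Nat.zero_lt_one

lemma T_mem_Icc {c : ℕ × ℕ} (hc : c ∈ cells n) : 1 ≤ T c ∧ T c ≤ 2 * n + 4 :=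
  hT.2.1.1 hc

lemma T00 : T (0, 0) = 1 := by
  obtain ⟨c, hc, hc1⟩ := hT.2.1.2.2 (show (1 : ℕ) ∈ Set.Icc 1 (2 * n + 4) by constructor <;> omega)
  have h00 := (T_mem_Icc hT (arm_mem_cells (show 0 ≤ n + 1 by omega))).1
  by_contra hne
  -- show T (0,0) < T c = 1, contradiction
  have hlt : T (0, 0) < T c := by
    rcases hc with ⟨h1, h2⟩ | h | ⟨h1, h2, h3⟩
    · obtain ⟨c1, c2⟩ := c
      simp only at h1 h2; subst h1
      have : 0 < c2 := by
        rcases Nat.eq_zero_or_pos c2 with rfl | h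
        · exact absurd hc1 hne
        · exact h
      exact row0_lt hT h2 this
    · subst h
      exact lt_trans (row0_lt hT (by omega) Nat.zero_lt_one) (T01_lt_heart hT)
    · obtain ⟨c1, c2⟩ := c
      simp only at h1 h2 h3; subst h1
      exact col0_lt hT h3 h2
  omega

lemma heart_ge3 : 3 ≤ T (1, 1) := by
  have h1 := T00 hT
  have h2 := row0_lt hT (show 1 ≤ n + 1 by omega) Nat.zero_lt_one
  have h3 := T01_lt_heart hT
  omega

lemma not_arm_heart {m : ℕ} (h1 : InArm n T m) (h2 : InHeart T m) : False := by
  obtain ⟨j, hj, hTj⟩ := h1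
  have := hT.2.1.2.1 (arm_mem_cells hj) heart_mem_cells (by rw [hTj, h2])
  simp at this

omit hT in
lemma col_mem_cells {i : ℕ} (hi : i ≤ n + 1) : ((i, 0) : ℕ × ℕ) ∈ cells n := by
  rcases Nat.eq_zero_or_pos i with rfl | h
  · exact arm_mem_cells (by omega)
  · exact leg_mem_cells h hi

lemma not_leg_heart {m : ℕ} (h1 : InLeg n T m) (h2 : InHeart T m) : False := by
  obtain ⟨i, hi, hTi⟩ := h1
  have hinj := hT.2.1.2.1 (col_mem_cells hi) heart_mem_cells (hTi.trans h2.symm)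
  rw [Prod.ext_iff] at hinj
  simp only at hinj
  omega

lemma not_arm_leg {m : ℕ} (hm : 2 ≤ m) (h1 : InArm n T m) (h2 : InLeg n T m) : False := by
  obtain ⟨j, hj, hTj⟩ := h1
  obtain ⟨i, hi, hTi⟩ := h2
  have hinj := hT.2.1.2.1 (arm_mem_cells hj) (col_mem_cells hi) (hTj.trans hTi.symm)
  rw [Prod.ext_iff] at hinj
  simp only at hinj
  obtain ⟨e1, e2⟩ := hinj
  subst e2
  rw [T00 hT] at hTj
  omega

lemma exists_place {m : ℕ} (h1 : 1 ≤ m) (h2 : m ≤ 2 * n + 4) :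
    InArm n T m ∨ InLeg n T m ∨ InHeart T m := by
  obtain ⟨c, hc, hcm⟩ := hT.2.1.2.2 (show m ∈ Set.Icc 1 (2 * n + 4) from ⟨h1, h2⟩)
  obtain ⟨c1, c2⟩ := c
  rcases hc with ⟨ha, hb⟩ | h | ⟨ha, hb, hc'⟩
  · simp only at ha hb; subst ha
    exact Or.inl ⟨c2, hb, hcm⟩
  · rw [Prod.ext_iff] at h
    simp only at h
    obtain ⟨e1, e2⟩ := h; subst e1; subst e2
    exact Or.inr (Or.inr hcm)
  · simp only at ha hb hc'; subst ha
    exact Or.inr (Or.inl ⟨c1, hc', hcm⟩)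

lemma two_arm_or_leg : InArm n T 2 ∨ InLeg n T 2 := by
  rcases exists_place hT (show 1 ≤ 2 by omega) (by omega) with h | h | h
  · exact Or.inl h
  · exact Or.inr h
  · exact absurd h (by have := heart_ge3 hT; rw [InHeart]; omega)

end SYT

open Classical in
noncomputable def letter (n : ℕ) (T : ℕ × ℕ → ℕ) (k : ℕ) : Step :=
  if InArm n T (k + 3) then Step.E
  else if InLeg n T (k + 3) then Step.N
  else if InHeart T (k + 3) ∧ InArm n T 2 then Step.S
  else Step.W

lemma psi_eq_ofFn (n : ℕ) (T : ℕ × ℕ → ℕ) :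
    psi n T = List.ofFn (fun k : Fin (2 * n + 2) => letter n T k.val) := rfl

lemma psi_length (n : ℕ) (T : ℕ × ℕ → ℕ) : (psi n T).length = 2 * n + 2 := by
  rw [psi_eq_ofFn]; exact List.length_ofFn

lemma psi_getElem (n : ℕ) (T : ℕ × ℕ → ℕ) (k : ℕ) (hk : k < (psi n T).length) :
    (psi n T)[k] = letter n T k := by
  rw [List.getElem_of_eq (psi_eq_ofFn n T) hk, List.getElem_ofFn]

section Letter
variable {n : ℕ} {T : ℕ × ℕ → ℕ} (hT : IsSYT n T)
include hT

omit hT in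
lemma letter_eq_E {k : ℕ} : letter n T k = Step.E ↔ InArm n T (k + 3) := by
  constructor
  · intro h
    unfold letter at h
    split_ifs at h with h1 h2 h3
    exact h1
  · intro h; unfold letter; rw [if_pos h]

lemma letter_eq_N {k : ℕ} : letter n T k = Step.N ↔ InLeg n T (k + 3) := by
  constructor
  · intro h
    unfold letter at h
    split_ifs at h with h1 h2 h3
    exact h2
  · intro h
    have h1 : ¬ InArm n T (k + 3) := fun ha => not_arm_leg hT (by omega) ha h
    unfold letter; rw [if_neg h1, if_pos h]

lemma letter_eq_S {k : ℕ} : letter n T k = Step.S ↔ InHeart T (k + 3) ∧ InArm n T 2 := by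
  constructor
  · intro h
    unfold letter at h
    split_ifs at h with h1 h2 h3
    exact h3
  · rintro ⟨hh, h2a⟩
    unfold letter
    rw [if_neg (fun ha => not_arm_heart hT ha hh), if_neg (fun hl => not_leg_heart hT hl hh),
      if_pos ⟨hh, h2a⟩]

lemma letter_eq_W {k : ℕ} (hk : k < 2 * n + 2) :
    letter n T k = Step.W ↔ InHeart T (k + 3) ∧ InLeg n T 2 := by
  constructor
  · intro h
    unfold letter at h
    split_ifs at h with h1 h2 h3
    · have hh : InHeart T (k + 3) := by
        rcases exists_place hT (show 1 ≤ k + 3 by omega) (by omega) with ha | hl | hh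
        · exact absurd ha h1
        · exact absurd hl h2
        · exact hh
      refine ⟨hh, ?_⟩
      rcases two_arm_or_leg hT with h2a | h2l
      · exact absurd ⟨hh, h2a⟩ h3
      · exact h2l
  · rintro ⟨hh, hl2⟩
    unfold letter
    rw [if_neg (fun ha => not_arm_heart hT ha hh), if_neg (fun hl => not_leg_heart hT hl hh),
      if_neg (fun hc => not_arm_leg hT (by omega) hc.2 hl2)]

end Letter
def armF (n : ℕ) (T : ℕ × ℕ → ℕ) : Finset ℕ := (Finset.range (n + 2)).image fun j => T (0, j)
def legF (n : ℕ) (T : ℕ × ℕ → ℕ) : Finset ℕ := (Finset.range (n + 2)).image fun i => T (i, 0)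

lemma mem_armF {n : ℕ} {T : ℕ × ℕ → ℕ} {m : ℕ} : m ∈ armF n T ↔ InArm n T m := by
  simp only [armF, Finset.mem_image, Finset.mem_range, InArm]
  constructor
  · rintro ⟨j, hj, hm⟩; exact ⟨j, by omega, hm⟩
  · rintro ⟨j, hj, hm⟩; exact ⟨j, by omega, hm⟩

lemma mem_legF {n : ℕ} {T : ℕ × ℕ → ℕ} {m : ℕ} : m ∈ legF n T ↔ InLeg n T m := by
  simp only [legF, Finset.mem_image, Finset.mem_range, InLeg]
  constructor
  · rintro ⟨j, hj, hm⟩; exact ⟨j, by omega, hm⟩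
  · rintro ⟨j, hj, hm⟩; exact ⟨j, by omega, hm⟩

section Inv
variable {n : ℕ} {T : ℕ × ℕ → ℕ} (hT : IsSYT n T)
include hT

lemma card_armF : (armF n T).card = n + 2 := by
  rw [armF, Finset.card_image_of_injOn, Finset.card_range]
  intro j hj j' hj' he
  have := hT.2.1.2.1 (arm_mem_cells (j := j) (by simpa [Nat.lt_succ_iff] using Finset.mem_range.1 hj))
    (arm_mem_cells (j := j') (by simpa [Nat.lt_succ_iff] using Finset.mem_range.1 hj')) he
  rw [Prod.ext_iff] at this
  exact this.2

lemma card_legF : (legF n T).card = n + 2 := by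
  rw [legF, Finset.card_image_of_injOn, Finset.card_range]
  intro j hj j' hj' he
  have := hT.2.1.2.1 (col_mem_cells (i := j) (by simpa [Nat.lt_succ_iff] using Finset.mem_range.1 hj))
    (col_mem_cells (i := j') (by simpa [Nat.lt_succ_iff] using Finset.mem_range.1 hj')) he
  rw [Prod.ext_iff] at this
  exact this.1

lemma armF_subset : armF n T ⊆ Finset.Icc 1 (2 * n + 4) := by
  intro m hm
  obtain ⟨j, hj, hm⟩ := mem_armF.1 hm
  obtain ⟨h1, h2⟩ := T_mem_Icc hT (arm_mem_cells hj)
  rw [Finset.mem_Icc]; omega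

lemma legF_subset : legF n T ⊆ Finset.Icc 1 (2 * n + 4) := by
  intro m hm
  obtain ⟨i, hi, hm⟩ := mem_legF.1 hm
  obtain ⟨h1, h2⟩ := T_mem_Icc hT (col_mem_cells hi)
  rw [Finset.mem_Icc]; omega

omit hT in
lemma one_mem_armF (h : T (0,0) = 1) : 1 ∈ armF n T :=
  mem_armF.2 ⟨0, by omega, h⟩

omit hT in
lemma one_mem_legF (h : T (0,0) = 1) : 1 ∈ legF n T :=
  mem_legF.2 ⟨0, by omega, h⟩

open Classical in
lemma prefix_endpt : ∀ k, k ≤ 2 * n + 2 → endpt ((psi n T).take k) =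
    ((((Finset.Icc 3 (k + 2)).filter (fun m => m ∈ armF n T)).card : ℤ) -
      (if T (1,1) ≤ k + 2 ∧ InLeg n T 2 then 1 else 0),
     (((Finset.Icc 3 (k + 2)).filter (fun m => m ∈ legF n T)).card : ℤ) -
      (if T (1,1) ≤ k + 2 ∧ InArm n T 2 then 1 else 0)) := by
  intro k
  induction k with
  | zero =>
    intro _
    have h3 := heart_ge3 hT
    rw [List.take_zero, endpt_nil]
    have he : Finset.Icc 3 (0 + 2) = (∅ : Finset ℕ) := by decide
    rw [he, if_neg (by omega), if_neg (by omega)]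
    simp
  | succ k ih =>
    intro hk1
    have hk : k < 2 * n + 2 := by omega
    have hklen : k < (psi n T).length := by rw [psi_length]; omega
    have htake : (psi n T).take (k + 1) = (psi n T).take k ++ [letter n T k] := by
      rw [List.take_succ, List.getElem?_eq_getElem hklen, psi_getElem n T k hklen]
      rfl
    rw [htake, endpt_append, ih (by omega)]
    have hIcc : Finset.Icc 3 (k + 3) = insert (k + 3) (Finset.Icc 3 (k + 2)) := by
      ext m; simp only [Finset.mem_Icc, Finset.mem_insert]; omega
    have hnotmem : (k + 3) ∉ Finset.Icc 3 (k + 2) := by simp [Finset.mem_Icc]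
    have hheart : 3 ≤ T (1,1) := heart_ge3 hT
    rcases exists_place hT (show 1 ≤ k + 3 by omega) (by omega) with ha | hl | hh
    · -- arm: letter = E
      rw [(letter_eq_E (n := n) (T := T)).2 ha]
      have hxa : ((Finset.Icc 3 (k + 1 + 2)).filter (fun m => m ∈ armF n T)).card
          = ((Finset.Icc 3 (k + 2)).filter (fun m => m ∈ armF n T)).card + 1 := by
        have : k + 1 + 2 = k + 3 := by omega
        rw [this, hIcc, Finset.filter_insert, if_pos (mem_armF.2 ha),
          Finset.card_insert_of_notMem (fun hmem => hnotmem (Finset.mem_filter.1 hmem).1)]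
      have hxl : ((Finset.Icc 3 (k + 1 + 2)).filter (fun m => m ∈ legF n T)).card
          = ((Finset.Icc 3 (k + 2)).filter (fun m => m ∈ legF n T)).card := by
        have : k + 1 + 2 = k + 3 := by omega
        rw [this, hIcc, Finset.filter_insert,
          if_neg (fun hmem => not_arm_leg hT (by omega) ha (mem_legF.1 hmem))]
      have hhne : T (1,1) ≠ k + 3 := fun he => not_arm_heart hT ha he
      have hind : ∀ P : Prop, (T (1,1) ≤ k + 1 + 2 ∧ P) ↔ (T (1,1) ≤ k + 2 ∧ P) := by
        intro P; constructor <;> rintro ⟨h1, h2⟩ <;> exact ⟨by omega, h2⟩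
      have hE : endpt [Step.E] = ((1:ℤ), (0:ℤ)) := by simp [endpt, stepVec]
      rw [hE, hxa, hxl, if_congr (hind (InLeg n T 2)) rfl rfl,
        if_congr (hind (InArm n T 2)) rfl rfl, Prod.ext_iff]
      constructor <;> simp only [Prod.fst_add, Prod.snd_add] <;> push_cast <;> ring
    · -- leg: letter = N
      rw [(letter_eq_N hT).2 hl]
      have hxa : ((Finset.Icc 3 (k + 1 + 2)).filter (fun m => m ∈ armF n T)).card
          = ((Finset.Icc 3 (k + 2)).filter (fun m => m ∈ armF n T)).card := by
        have : k + 1 + 2 = k + 3 := by omega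
        rw [this, hIcc, Finset.filter_insert,
          if_neg (fun hmem => not_arm_leg hT (by omega) (mem_armF.1 hmem) hl)]
      have hxl : ((Finset.Icc 3 (k + 1 + 2)).filter (fun m => m ∈ legF n T)).card
          = ((Finset.Icc 3 (k + 2)).filter (fun m => m ∈ legF n T)).card + 1 := by
        have : k + 1 + 2 = k + 3 := by omega
        rw [this, hIcc, Finset.filter_insert, if_pos (mem_legF.2 hl),
          Finset.card_insert_of_notMem (fun hmem => hnotmem (Finset.mem_filter.1 hmem).1)]
      have hhne : T (1,1) ≠ k + 3 := fun he => not_leg_heart hT hl he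
      have hind : ∀ P : Prop, (T (1,1) ≤ k + 1 + 2 ∧ P) ↔ (T (1,1) ≤ k + 2 ∧ P) := by
        intro P; constructor <;> rintro ⟨h1, h2⟩ <;> exact ⟨by omega, h2⟩
      have hN : endpt [Step.N] = ((0:ℤ), (1:ℤ)) := by simp [endpt, stepVec]
      rw [hN, hxa, hxl, if_congr (hind (InLeg n T 2)) rfl rfl,
        if_congr (hind (InArm n T 2)) rfl rfl, Prod.ext_iff]
      constructor <;> simp only [Prod.fst_add, Prod.snd_add] <;> push_cast <;> ring
    · -- heart
      have hxa : ((Finset.Icc 3 (k + 1 + 2)).filter (fun m => m ∈ armF n T)).card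
          = ((Finset.Icc 3 (k + 2)).filter (fun m => m ∈ armF n T)).card := by
        have : k + 1 + 2 = k + 3 := by omega
        rw [this, hIcc, Finset.filter_insert,
          if_neg (fun hmem => not_arm_heart hT (mem_armF.1 hmem) hh)]
      have hxl : ((Finset.Icc 3 (k + 1 + 2)).filter (fun m => m ∈ legF n T)).card
          = ((Finset.Icc 3 (k + 2)).filter (fun m => m ∈ legF n T)).card := by
        have : k + 1 + 2 = k + 3 := by omega
        rw [this, hIcc, Finset.filter_insert,
          if_neg (fun hmem => not_leg_heart hT (mem_legF.1 hmem) hh)]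
      have hhv : T (1,1) = k + 3 := hh
      rcases two_arm_or_leg hT with h2a | h2l
      · -- 2 in arm: letter = S
        rw [(letter_eq_S hT).2 ⟨hh, h2a⟩]
        have hnl2 : ¬ InLeg n T 2 := fun hl2 => not_arm_leg hT le_rfl h2a hl2
        have hS : endpt [Step.S] = ((0:ℤ), (-1:ℤ)) := by simp [endpt, stepVec]
        have e1 : (if T (1,1) ≤ k + 1 + 2 ∧ InLeg n T 2 then (1:ℤ) else 0) = 0 :=
          if_neg (fun hc => hnl2 hc.2)
        have e0 : (if T (1,1) ≤ k + 2 ∧ InLeg n T 2 then (1:ℤ) else 0) = 0 :=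
          if_neg (fun hc => hnl2 hc.2)
        have eR1 : (if T (1,1) ≤ k + 1 + 2 ∧ InArm n T 2 then (1:ℤ) else 0) = 1 :=
          if_pos ⟨by omega, h2a⟩
        have eR0 : (if T (1,1) ≤ k + 2 ∧ InArm n T 2 then (1:ℤ) else 0) = 0 :=
          if_neg (fun hc => absurd hc.1 (by omega))
        rw [hS, hxa, hxl, e1, e0, eR1, eR0, Prod.ext_iff]
        constructor <;> simp only [Prod.fst_add, Prod.snd_add] <;> push_cast <;> ring
      · -- 2 in leg: letter = W
        have hna2 : ¬ InArm n T 2 := fun ha2 => not_arm_leg hT le_rfl ha2 h2l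
        rw [(letter_eq_W hT hk).2 ⟨hh, h2l⟩]
        have hW : endpt [Step.W] = ((-1:ℤ), (0:ℤ)) := by simp [endpt, stepVec]
        have e1 : (if T (1,1) ≤ k + 1 + 2 ∧ InLeg n T 2 then (1:ℤ) else 0) = 1 :=
          if_pos ⟨by omega, h2l⟩
        have e0 : (if T (1,1) ≤ k + 2 ∧ InLeg n T 2 then (1:ℤ) else 0) = 0 :=
          if_neg (fun hc => absurd hc.1 (by omega))
        have eR1 : (if T (1,1) ≤ k + 1 + 2 ∧ InArm n T 2 then (1:ℤ) else 0) = 0 :=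
          if_neg (fun hc => hna2 hc.2)
        have eR0 : (if T (1,1) ≤ k + 2 ∧ InArm n T 2 then (1:ℤ) else 0) = 0 :=
          if_neg (fun hc => hna2 hc.2)
        rw [hW, hxa, hxl, e1, e0, eR1, eR0, Prod.ext_iff]
        constructor <;> simp only [Prod.fst_add, Prod.snd_add] <;> push_cast <;> ring

end Inv
section MapsToPsi
variable {n : ℕ} {T : ℕ × ℕ → ℕ} (hT : IsSYT n T)
include hT

lemma filter_armF_eq : (Finset.Icc 3 (2 * n + 4)).filter (fun m => m ∈ armF n T)
    = armF n T \ {1, 2} := by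
  ext m
  simp only [Finset.mem_filter, Finset.mem_Icc, Finset.mem_sdiff, Finset.mem_insert,
    Finset.mem_singleton]
  constructor
  · rintro ⟨⟨h3, h4⟩, h5⟩; exact ⟨h5, by omega⟩
  · rintro ⟨h5, h6⟩
    have := Finset.mem_Icc.1 (armF_subset hT h5)
    exact ⟨⟨by omega, this.2⟩, h5⟩

lemma filter_legF_eq : (Finset.Icc 3 (2 * n + 4)).filter (fun m => m ∈ legF n T)
    = legF n T \ {1, 2} := by
  ext m
  simp only [Finset.mem_filter, Finset.mem_Icc, Finset.mem_sdiff, Finset.mem_insert,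
    Finset.mem_singleton]
  constructor
  · rintro ⟨⟨h3, h4⟩, h5⟩; exact ⟨h5, by omega⟩
  · rintro ⟨h5, h6⟩
    have := Finset.mem_Icc.1 (legF_subset hT h5)
    exact ⟨⟨by omega, this.2⟩, h5⟩

omit hT in
lemma card_sdiff12 {s : Finset ℕ} (h1 : 1 ∈ s) (hcard : s.card = n + 2) (h2 : 2 ∈ s) :
    (s \ {1, 2}).card = n := by
  have hsub : ({1, 2} : Finset ℕ) ⊆ s := by
    intro x hx
    rcases Finset.mem_insert.1 hx with rfl | hx
    · exact h1
    · rw [Finset.mem_singleton.1 hx]; exact h2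
  rw [Finset.card_sdiff_of_subset hsub, hcard]
  rfl

omit hT in
lemma card_sdiff1 {s : Finset ℕ} (h1 : 1 ∈ s) (hcard : s.card = n + 2) (h2 : 2 ∉ s) :
    (s \ {1, 2}).card = n + 1 := by
  have he : s \ {1, 2} = s \ {1} := by
    ext m
    simp only [Finset.mem_sdiff, Finset.mem_insert, Finset.mem_singleton]
    constructor
    · rintro ⟨hm, hne⟩; exact ⟨hm, fun h => hne (Or.inl h)⟩
    · rintro ⟨hm, hne⟩
      refine ⟨hm, ?_⟩
      rintro (rfl | rfl)
      · exact hne rfl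
      · exact h2 hm
  rw [he, Finset.card_sdiff_of_subset (by simpa using h1), hcard]
  rfl

lemma psi_isPath : IsPath n (psi n T) := by
  have hT00 := T00 hT
  have hheart3 := heart_ge3 hT
  have hheartle := (T_mem_Icc hT heart_mem_cells).2
  refine ⟨psi_length n T, ?_, ?_⟩
  · -- nonnegativity
    have key : ∀ k, k ≤ 2 * n + 2 → 0 ≤ (endpt ((psi n T).take k)).1 ∧
        0 ≤ (endpt ((psi n T).take k)).2 := by
      intro k hk
      rw [prefix_endpt hT k hk]
      constructor
      · simp only
        split_ifs with hc
        · obtain ⟨hc1, hc2⟩ := hc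
          have hm : T (0, 1) ∈ (Finset.Icc 3 (k + 2)).filter (fun m => m ∈ armF n T) := by
            rw [Finset.mem_filter, Finset.mem_Icc]
            have hgt : 1 < T (0, 1) := by rw [← hT00]; exact row0_lt hT (by omega) (by omega)
            have hne2 : T (0, 1) ≠ 2 := fun h2 =>
              not_arm_leg hT le_rfl ⟨1, by omega, h2⟩ hc2
            have hlt : T (0, 1) < T (1, 1) := T01_lt_heart hT
            exact ⟨⟨by omega, by omega⟩, mem_armF.2 ⟨1, by omega, rfl⟩⟩
          have := Finset.card_pos.2 ⟨_, hm⟩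
          omega
        · simp
      · simp only
        split_ifs with hc
        · obtain ⟨hc1, hc2⟩ := hc
          have hm : T (1, 0) ∈ (Finset.Icc 3 (k + 2)).filter (fun m => m ∈ legF n T) := by
            rw [Finset.mem_filter, Finset.mem_Icc]
            have hgt : 1 < T (1, 0) := by rw [← hT00]; exact col0_lt hT (by omega) (by omega)
            have hne2 : T (1, 0) ≠ 2 := fun h2 =>
              not_arm_leg hT le_rfl hc2 ⟨1, by omega, h2⟩
            have hlt : T (1, 0) < T (1, 1) := T10_lt_heart hT
            exact ⟨⟨by omega, by omega⟩, mem_legF.2 ⟨1, by omega, rfl⟩⟩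
          have := Finset.card_pos.2 ⟨_, hm⟩
          omega
        · simp
    intro k
    rcases le_or_gt k (2 * n + 2) with hk | hk
    · exact key k hk
    · have : (psi n T).take k = (psi n T).take (2 * n + 2) := by
        rw [List.take_of_length_le (by rw [psi_length]; omega),
          List.take_of_length_le (by rw [psi_length])]
      rw [this]
      exact key (2 * n + 2) le_rfl
  · -- endpoint
    have h1 : (psi n T) = (psi n T).take (2 * n + 2) :=
      (List.take_of_length_le (by rw [psi_length])).symm
    rw [h1, prefix_endpt hT (2 * n + 2) le_rfl]
    have h24 : 2 * n + 2 + 2 = 2 * n + 4 := by omega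
    rw [h24, filter_armF_eq hT, filter_legF_eq hT]
    rcases two_arm_or_leg hT with h2a | h2l
    · have hnl2 : ¬ InLeg n T 2 := fun h => not_arm_leg hT le_rfl h2a h
      have ca : (armF n T \ {1, 2}).card = n :=
        card_sdiff12 (one_mem_armF hT00) (card_armF hT) (mem_armF.2 h2a)
      have cl : (legF n T \ {1, 2}).card = n + 1 :=
        card_sdiff1 (one_mem_legF hT00) (card_legF hT) (fun h => hnl2 (mem_legF.1 h))
      rw [ca, cl, if_neg (fun hc => hnl2 hc.2), if_pos ⟨by omega, h2a⟩]
      rw [Prod.ext_iff]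
      constructor <;> simp <;> push_cast <;> ring
    · have hna2 : ¬ InArm n T 2 := fun h => not_arm_leg hT le_rfl h h2l
      have ca : (armF n T \ {1, 2}).card = n + 1 :=
        card_sdiff1 (one_mem_armF hT00) (card_armF hT) (fun h => hna2 (mem_armF.1 h))
      have cl : (legF n T \ {1, 2}).card = n :=
        card_sdiff12 (one_mem_legF hT00) (card_legF hT) (mem_legF.2 h2l)
      rw [ca, cl, if_pos ⟨by omega, h2l⟩, if_neg (fun hc => hna2 hc.2)]
      rw [Prod.ext_iff]
      constructor <;> simp <;> push_cast <;> ring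

end MapsToPsi
/-! ### Sorted-list helpers -/

namespace SortH

variable {s : Finset ℕ}

lemma getD_mem {i : ℕ} (h : i < s.card) : (s.sort (· ≤ ·)).getD i 0 ∈ s := by
  have hl : i < (s.sort (· ≤ ·)).length := by rwa [Finset.length_sort]
  rw [List.getD_eq_getElem _ _ hl]
  exact (Finset.mem_sort _).1 (List.getElem_mem hl)

lemma getD_strictMono {i j : ℕ} (hij : i < j) (hj : j < s.card) :
    (s.sort (· ≤ ·)).getD i 0 < (s.sort (· ≤ ·)).getD j 0 := by
  have hlj : j < (s.sort (· ≤ ·)).length := by rwa [Finset.length_sort]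
  have hli : i < (s.sort (· ≤ ·)).length := by omega
  rw [List.getD_eq_getElem _ _ hli, List.getD_eq_getElem _ _ hlj]
  exact (Finset.sortedLT_sort s).getElem_lt_getElem_of_lt hij

lemma getD_surj {x : ℕ} (hx : x ∈ s) : ∃ i < s.card, (s.sort (· ≤ ·)).getD i 0 = x := by
  obtain ⟨i, hi, he⟩ := List.mem_iff_getElem.1 ((Finset.mem_sort (α := ℕ) (· ≤ ·)).2 hx)
  refine ⟨i, by rwa [Finset.length_sort] at hi, ?_⟩
  rw [List.getD_eq_getElem _ _ hi, he]

lemma getD_zero (h1 : 1 ∈ s) (hall : ∀ x ∈ s, 1 ≤ x) : (s.sort (· ≤ ·)).getD 0 0 = 1 := by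
  have hpos : 0 < s.card := Finset.card_pos.2 ⟨1, h1⟩
  have h0 : 0 < (s.sort (· ≤ ·)).length := by rwa [Finset.length_sort]
  rw [List.getD_eq_getElem _ _ h0, Finset.sorted_zero_eq_min']
  exact le_antisymm (Finset.min'_le s 1 h1) (hall _ (s.min'_mem _))

lemma getD_one_le {x : ℕ} (hx : x ∈ s) (hgt : 1 < x) (h1 : 1 ∈ s)
    (hall : ∀ y ∈ s, 1 ≤ y) : (s.sort (· ≤ ·)).getD 1 0 ≤ x := by
  obtain ⟨i, hi, he⟩ := getD_surj hx
  have h1card : 1 < s.card := by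
    by_contra hc
    have hi0 : i = 0 := by omega
    subst hi0
    rw [getD_zero h1 hall] at he; omega
  rcases Nat.eq_zero_or_pos i with rfl | hipos
  · rw [getD_zero h1 hall] at he; omega
  rcases Nat.lt_or_ge 1 i with h | h
  · exact le_of_lt (he ▸ getD_strictMono h hi)
  · have : i = 1 := by omega
    subst this; omega

end SortH

/-! ### The inverse map φ -/

open Classical in
lemma count_eq_card_filter (l : List Step) (a d : Step) (hd : d ≠ a) :
    ((Finset.range l.length).filter (fun k => l.getD k d = a)).card = l.count a := by
  induction l using List.reverseRecOn with
  | nil => simp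
  | append_singleton t x ih =>
    rw [List.length_append, List.length_singleton, Finset.range_add_one, Finset.filter_insert]
    have hfc : (Finset.range t.length).filter (fun k => (t ++ [x]).getD k d = a)
        = (Finset.range t.length).filter (fun k => t.getD k d = a) := by
      apply Finset.filter_congr
      intro k hk
      have hk' : k < t.length := Finset.mem_range.1 hk
      rw [List.getD_eq_getElem _ _ (by simp; omega), List.getD_eq_getElem _ _ hk',
        List.getElem_append_left hk']
    have hlast : (t ++ [x]).getD t.length d = x := by
      rw [List.getD_eq_getElem _ _ (by simp), List.getElem_append_right (le_refl t.length)]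
      simp
    rw [hfc, List.count_append]
    by_cases hxa : x = a
    · rw [if_pos (by rw [hlast, hxa]), Finset.card_insert_of_notMem (by simp),
        ih, hxa]
      simp
    · rw [if_neg (by rw [hlast]; exact hxa), ih,
        List.count_eq_zero_of_not_mem (l := [x]) (by
          rw [List.mem_singleton]; exact fun h => hxa h.symm)]
      omega

def eSet (w : List Step) : Finset ℕ :=
  (Finset.range w.length).filter (fun k => w.getD k Step.N = Step.E)

def nSet (w : List Step) : Finset ℕ :=
  (Finset.range w.length).filter (fun k => w.getD k Step.E = Step.N)

def swSet (w : List Step) : Finset ℕ :=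
  (Finset.range w.length).filter (fun k => w.getD k Step.E = Step.S ∨ w.getD k Step.E = Step.W)

def swIdx (w : List Step) : ℕ := (swSet w).sum id

noncomputable def armVals (w : List Step) : Finset ℕ :=
  insert 1 ((if Step.S ∈ w then {2} else ∅) ∪ (eSet w).image (· + 3))

noncomputable def legVals (w : List Step) : Finset ℕ :=
  insert 1 ((if Step.W ∈ w then {2} else ∅) ∪ (nSet w).image (· + 3))

noncomputable def phi (n : ℕ) (w : List Step) : ℕ × ℕ → ℕ := fun c =>
  if c.1 = 0 ∧ c.2 ≤ n + 1 then ((armVals w).sort (· ≤ ·)).getD c.2 0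
  else if c = (1, 1) then swIdx w + 3
  else if c.2 = 0 ∧ 1 ≤ c.1 ∧ c.1 ≤ n + 1 then ((legVals w).sort (· ≤ ·)).getD c.1 0
  else 0
lemma mem_eSet {w : List Step} {k : ℕ} :
    k ∈ eSet w ↔ ∃ h : k < w.length, w[k] = Step.E := by
  unfold eSet
  rw [Finset.mem_filter, Finset.mem_range]
  constructor
  · rintro ⟨h1, h2⟩; exact ⟨h1, by rwa [List.getD_eq_getElem _ _ h1] at h2⟩
  · rintro ⟨h1, h2⟩; exact ⟨h1, by rwa [List.getD_eq_getElem _ _ h1]⟩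

lemma mem_nSet {w : List Step} {k : ℕ} :
    k ∈ nSet w ↔ ∃ h : k < w.length, w[k] = Step.N := by
  unfold nSet
  rw [Finset.mem_filter, Finset.mem_range]
  constructor
  · rintro ⟨h1, h2⟩; exact ⟨h1, by rwa [List.getD_eq_getElem _ _ h1] at h2⟩
  · rintro ⟨h1, h2⟩; exact ⟨h1, by rwa [List.getD_eq_getElem _ _ h1]⟩

lemma mem_swSet {w : List Step} {k : ℕ} :
    k ∈ swSet w ↔ ∃ h : k < w.length, (w[k] = Step.S ∨ w[k] = Step.W) := by
  unfold swSet
  rw [Finset.mem_filter, Finset.mem_range]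
  constructor
  · rintro ⟨h1, h2⟩; exact ⟨h1, by rwa [List.getD_eq_getElem _ _ h1] at h2⟩
  · rintro ⟨h1, h2⟩; exact ⟨h1, by rwa [List.getD_eq_getElem _ _ h1]⟩

lemma card_eSet (w : List Step) : (eSet w).card = w.count Step.E :=
  count_eq_card_filter w Step.E Step.N (by decide)

lemma card_nSet (w : List Step) : (nSet w).card = w.count Step.N :=
  count_eq_card_filter w Step.N Step.E (by decide)

lemma card_swSet (w : List Step) : (swSet w).card = w.count Step.S + w.count Step.W := by
  unfold swSet
  rw [Finset.filter_or, Finset.card_union_of_disjoint, count_eq_card_filter w Step.S Step.E (by decide),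
    count_eq_card_filter w Step.W Step.E (by decide)]
  rw [Finset.disjoint_filter]
  intro k _ h1 h2
  rw [h1] at h2
  exact absurd h2 (by decide)

lemma mem_armVals {w : List Step} {m : ℕ} :
    m ∈ armVals w ↔ m = 1 ∨ (Step.S ∈ w ∧ m = 2) ∨ ∃ k ∈ eSet w, k + 3 = m := by
  unfold armVals
  by_cases hs : Step.S ∈ w <;>
    simp [hs, Finset.mem_insert, Finset.mem_union, Finset.mem_image] <;> tauto

lemma mem_legVals {w : List Step} {m : ℕ} :
    m ∈ legVals w ↔ m = 1 ∨ (Step.W ∈ w ∧ m = 2) ∨ ∃ k ∈ nSet w, k + 3 = m := by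
  unfold legVals
  by_cases hs : Step.W ∈ w <;>
    simp [hs, Finset.mem_insert, Finset.mem_union, Finset.mem_image] <;> tauto

lemma armVals_ge1 {w : List Step} : ∀ x ∈ armVals w, 1 ≤ x := by
  intro x hx
  rcases mem_armVals.1 hx with rfl | ⟨-, rfl⟩ | ⟨k, -, rfl⟩ <;> omega

lemma legVals_ge1 {w : List Step} : ∀ x ∈ legVals w, 1 ≤ x := by
  intro x hx
  rcases mem_legVals.1 hx with rfl | ⟨-, rfl⟩ | ⟨k, -, rfl⟩ <;> omega

lemma one_mem_armVals {w : List Step} : 1 ∈ armVals w := mem_armVals.2 (Or.inl rfl)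
lemma one_mem_legVals {w : List Step} : 1 ∈ legVals w := mem_legVals.2 (Or.inl rfl)

section PathFacts
variable {n : ℕ} {w : List Step} (hw : IsPath n w)
include hw

lemma sw_split : (Step.S ∈ w ∧ Step.W ∉ w ∧ w.count Step.E = n ∧ w.count Step.N = n + 1) ∨
    (Step.W ∈ w ∧ Step.S ∉ w ∧ w.count Step.E = n + 1 ∧ w.count Step.N = n) := by
  obtain ⟨h1, h2, h3⟩ := path_counts hw
  rcases Nat.eq_zero_or_pos (w.count Step.S) with hS | hS
  · right
    have hWc : w.count Step.W = 1 := by omega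
    refine ⟨List.count_pos_iff.1 (by omega), ?_, by omega, by omega⟩
    intro hmem
    rw [← List.count_pos_iff] at hmem
    omega
  · left
    have hSc : w.count Step.S = 1 := by omega
    refine ⟨List.count_pos_iff.1 (by omega), ?_, by omega, by omega⟩
    intro hmem
    rw [← List.count_pos_iff] at hmem
    omega

lemma card_armVals : (armVals w).card = n + 2 := by
  have hcE := card_eSet w
  have h2ni : ∀ x ∈ (if Step.S ∈ w then ({2} : Finset ℕ) else ∅) ∪ (eSet w).image (· + 3),
      x ≠ 1 := by
    intro x hx
    rcases Finset.mem_union.1 hx with hx | hx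
    · split_ifs at hx
      · rw [Finset.mem_singleton.1 hx]; omega
      · exact absurd hx (Finset.notMem_empty x)
    · obtain ⟨k, -, rfl⟩ := Finset.mem_image.1 hx; omega
  have hdisj : Disjoint (if Step.S ∈ w then ({2} : Finset ℕ) else ∅) ((eSet w).image (· + 3)) := by
    rw [Finset.disjoint_left]
    intro x hx hx2
    obtain ⟨k, -, rfl⟩ := Finset.mem_image.1 hx2
    split_ifs at hx
    · have := Finset.mem_singleton.1 hx; omega
    · exact absurd hx (Finset.notMem_empty _)
  rw [armVals, Finset.card_insert_of_notMem (fun h => h2ni 1 h rfl),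
    Finset.card_union_of_disjoint hdisj, Finset.card_image_of_injective _ (add_left_injective 3),
    hcE]
  rcases sw_split hw with ⟨hS, -, hE, -⟩ | ⟨-, hS, hE, -⟩
  · rw [if_pos hS, hE]; simp; omega
  · rw [if_neg hS, hE]; simp

lemma card_legVals : (legVals w).card = n + 2 := by
  have hcN := card_nSet w
  have hdisj : Disjoint (if Step.W ∈ w then ({2} : Finset ℕ) else ∅) ((nSet w).image (· + 3)) := by
    rw [Finset.disjoint_left]
    intro x hx hx2
    obtain ⟨k, -, rfl⟩ := Finset.mem_image.1 hx2
    split_ifs at hx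
    · have := Finset.mem_singleton.1 hx; omega
    · exact absurd hx (Finset.notMem_empty _)
  have h1ni : (1 : ℕ) ∉ (if Step.W ∈ w then ({2} : Finset ℕ) else ∅) ∪ (nSet w).image (· + 3) := by
    intro hx
    rcases Finset.mem_union.1 hx with hx | hx
    · split_ifs at hx
      · have := Finset.mem_singleton.1 hx; omega
      · exact absurd hx (Finset.notMem_empty _)
    · obtain ⟨k, -, hk⟩ := Finset.mem_image.1 hx; omega
  rw [legVals, Finset.card_insert_of_notMem h1ni,
    Finset.card_union_of_disjoint hdisj, Finset.card_image_of_injective _ (add_left_injective 3),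
    hcN]
  rcases sw_split hw with ⟨-, hW, -, hN⟩ | ⟨hW, -, -, hN⟩
  · rw [if_neg hW, hN]; simp
  · rw [if_pos hW, hN]; simp; omega

lemma exists_sw : ∃ k, ∃ h : k < w.length, (w[k] = Step.S ∨ w[k] = Step.W) := by
  rcases sw_split hw with ⟨hS, -⟩ | ⟨hW, -⟩
  · obtain ⟨k, hk, he⟩ := List.mem_iff_getElem.1 hS
    exact ⟨k, hk, Or.inl he⟩
  · obtain ⟨k, hk, he⟩ := List.mem_iff_getElem.1 hW
    exact ⟨k, hk, Or.inr he⟩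

lemma swSet_eq {k : ℕ} (hk : k < w.length) (h : w[k] = Step.S ∨ w[k] = Step.W) :
    swSet w = {k} := by
  have hcard : (swSet w).card = 1 := by
    rw [card_swSet]
    obtain ⟨-, -, hsw⟩ := path_counts hw
    exact hsw
  obtain ⟨a, ha⟩ := Finset.card_eq_one.1 hcard
  have hkm : k ∈ swSet w := mem_swSet.2 ⟨hk, h⟩
  rw [ha] at hkm ⊢
  rw [Finset.mem_singleton.1 hkm]

lemma swIdx_eq {k : ℕ} (hk : k < w.length) (h : w[k] = Step.S ∨ w[k] = Step.W) :
    swIdx w = k := by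
  rw [swIdx, swSet_eq hw hk h, Finset.sum_singleton, id]

lemma swIdx_spec : ∃ h : swIdx w < w.length,
    (w[swIdx w] = Step.S ∨ w[swIdx w] = Step.W) := by
  obtain ⟨k, hk, h⟩ := exists_sw hw
  rw [swIdx_eq hw hk h]
  exact ⟨hk, h⟩

end PathFacts
section PhiVals
variable {n : ℕ} {w : List Step}

lemma phi_arm {j : ℕ} (hj : j ≤ n + 1) :
    phi n w (0, j) = ((armVals w).sort (· ≤ ·)).getD j 0 := by
  unfold phi
  rw [if_pos (show (0, j).1 = 0 ∧ (0, j).2 ≤ n + 1 from ⟨rfl, hj⟩)]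

lemma phi_heart : phi n w (1, 1) = swIdx w + 3 := by
  unfold phi
  rw [if_neg (by simp), if_pos rfl]

lemma phi_leg {i : ℕ} (h1 : 1 ≤ i) (hi : i ≤ n + 1) :
    phi n w (i, 0) = ((legVals w).sort (· ≤ ·)).getD i 0 := by
  unfold phi
  rw [if_neg (fun hx => by have : i = 0 := hx.1; omega), if_neg (by simp [Prod.ext_iff]),
    if_pos (show (i, 0).2 = 0 ∧ 1 ≤ (i, 0).1 ∧ (i, 0).1 ≤ n + 1 from ⟨rfl, h1, hi⟩)]

lemma phi_00 : phi n w (0, 0) = 1 := by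
  rw [phi_arm (by omega), SortH.getD_zero one_mem_armVals armVals_ge1]

lemma phi_zero_outside : ∀ c ∉ cells n, phi n w c = 0 := by
  intro c hc
  rw [cells, Set.mem_setOf_eq] at hc
  push_neg at hc
  obtain ⟨h1, h2, h3⟩ := hc
  unfold phi
  rw [if_neg (fun hx => by have := h1 hx.1; omega), if_neg h2,
    if_neg (fun hx => by have := h3 hx.1 hx.2.1; omega)]

variable (hw : IsPath n w)
include hw

lemma InArm_phi {m : ℕ} : InArm n (phi n w) m ↔ m ∈ armVals w := by
  constructor
  · rintro ⟨j, hj, he⟩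
    rw [phi_arm hj] at he
    rw [← he]
    exact SortH.getD_mem (by rw [card_armVals hw]; omega)
  · intro hm
    obtain ⟨i, hi, he⟩ := SortH.getD_surj hm
    rw [card_armVals hw] at hi
    exact ⟨i, by omega, by rw [phi_arm (by omega)]; exact he⟩

lemma InLeg_phi {m : ℕ} : InLeg n (phi n w) m ↔ m ∈ legVals w := by
  constructor
  · rintro ⟨i, hi, he⟩
    rcases Nat.eq_zero_or_pos i with rfl | hpos
    · rw [phi_00] at he
      rw [← he]; exact one_mem_legVals
    · rw [phi_leg hpos hi] at he
      rw [← he]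
      exact SortH.getD_mem (by rw [card_legVals hw]; omega)
  · intro hm
    obtain ⟨i, hi, he⟩ := SortH.getD_surj hm
    rw [card_legVals hw] at hi
    rcases Nat.eq_zero_or_pos i with rfl | hpos
    · rw [SortH.getD_zero one_mem_legVals legVals_ge1] at he
      exact ⟨0, by omega, by rw [phi_00]; exact he⟩
    · exact ⟨i, by omega, by rw [phi_leg hpos (by omega)]; exact he⟩

omit hw in
lemma InHeart_phi {m : ℕ} : InHeart (phi n w) m ↔ m = swIdx w + 3 := by
  rw [InHeart, phi_heart]; exact eq_comm

lemma armVals_le : ∀ x ∈ armVals w, x ≤ 2 * n + 4 := by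
  intro x hx
  rcases mem_armVals.1 hx with rfl | ⟨-, rfl⟩ | ⟨k, hk, rfl⟩
  · omega
  · omega
  · obtain ⟨hlt, -⟩ := mem_eSet.1 hk
    rw [hw.1] at hlt; omega

lemma legVals_le : ∀ x ∈ legVals w, x ≤ 2 * n + 4 := by
  intro x hx
  rcases mem_legVals.1 hx with rfl | ⟨-, rfl⟩ | ⟨k, hk, rfl⟩
  · omega
  · omega
  · obtain ⟨hlt, -⟩ := mem_nSet.1 hk
    rw [hw.1] at hlt; omega

lemma arm_inter_leg {m : ℕ} (h1 : m ∈ armVals w) (h2 : m ∈ legVals w) : m = 1 := by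
  rcases mem_armVals.1 h1 with rfl | ⟨hS, rfl⟩ | ⟨k, hk, rfl⟩
  · rfl
  · rcases mem_legVals.1 h2 with h | ⟨hW, h⟩ | ⟨k, hk, h⟩
    · omega
    · rcases sw_split hw with ⟨-, hnW, -⟩ | ⟨-, hnS, -⟩
      · exact absurd hW hnW
      · exact absurd hS hnS
    · omega
  · rcases mem_legVals.1 h2 with h | ⟨hW, h⟩ | ⟨k', hk', h⟩
    · omega
    · omega
    · have hkk : k = k' := by omega
      subst hkk
      obtain ⟨ha, hb⟩ := mem_eSet.1 hk
      obtain ⟨hc, hd⟩ := mem_nSet.1 hk'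
      rw [hb] at hd
      exact absurd hd (by decide)

lemma swv_not_arm : swIdx w + 3 ∉ armVals w := by
  intro hm
  obtain ⟨hlt, hsw⟩ := swIdx_spec hw
  rcases mem_armVals.1 hm with h | ⟨-, h⟩ | ⟨k, hk, h⟩
  · omega
  · omega
  · have : k = swIdx w := by omega
    subst this
    obtain ⟨ha, hb⟩ := mem_eSet.1 hk
    rcases hsw with h' | h' <;> rw [hb] at h' <;> exact absurd h' (by decide)

lemma swv_not_leg : swIdx w + 3 ∉ legVals w := by
  intro hm
  obtain ⟨hlt, hsw⟩ := swIdx_spec hw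
  rcases mem_legVals.1 hm with h | ⟨-, h⟩ | ⟨k, hk, h⟩
  · omega
  · omega
  · have : k = swIdx w := by omega
    subst this
    obtain ⟨ha, hb⟩ := mem_nSet.1 hk
    rcases hsw with h' | h' <;> rw [hb] at h' <;> exact absurd h' (by decide)

end PhiVals
section KeyLemmas
variable {n : ℕ} {w : List Step} (hw : IsPath n w)
include hw

lemma exists_E_before {k : ℕ} (hk : k < w.length) (hW : w[k] = Step.W) :
    ∃ j, ∃ hj : j < w.length, j < k ∧ w[j] = Step.E := by
  have hx := (hw.2.1 (k + 1)).1
  rw [endpt_fst] at hx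
  have hlt : k < (w.take (k + 1)).length := by rw [List.length_take]; omega
  have hWmem : Step.W ∈ w.take (k + 1) :=
    List.mem_iff_getElem.2 ⟨k, hlt, by rw [List.getElem_take]; exact hW⟩
  have hWpos : 0 < (w.take (k + 1)).count Step.W := List.count_pos_iff.2 hWmem
  have hEpos : 0 < (w.take (k + 1)).count Step.E := by omega
  obtain ⟨j, hj, hE⟩ := List.mem_iff_getElem.1 (List.count_pos_iff.1 hEpos)
  rw [List.getElem_take] at hE
  have hjlen : j < w.length := by
    have := hj; rw [List.length_take] at this; omega
  have hjk : j < k + 1 := by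
    have := hj; rw [List.length_take] at this; omega
  refine ⟨j, hjlen, ?_, hE⟩
  rcases Nat.lt_or_ge j k with h | h
  · exact h
  · exfalso
    have : j = k := by omega
    subst this
    rw [hE] at hW
    exact absurd hW (by decide)

lemma exists_N_before {k : ℕ} (hk : k < w.length) (hS : w[k] = Step.S) :
    ∃ j, ∃ hj : j < w.length, j < k ∧ w[j] = Step.N := by
  have hx := (hw.2.1 (k + 1)).2
  rw [endpt_snd] at hx
  have hlt : k < (w.take (k + 1)).length := by rw [List.length_take]; omega
  have hSmem : Step.S ∈ w.take (k + 1) :=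
    List.mem_iff_getElem.2 ⟨k, hlt, by rw [List.getElem_take]; exact hS⟩
  have hSpos : 0 < (w.take (k + 1)).count Step.S := List.count_pos_iff.2 hSmem
  have hNpos : 0 < (w.take (k + 1)).count Step.N := by omega
  obtain ⟨j, hj, hN⟩ := List.mem_iff_getElem.1 (List.count_pos_iff.1 hNpos)
  rw [List.getElem_take] at hN
  have hjlen : j < w.length := by
    have := hj; rw [List.length_take] at this; omega
  have hjk : j < k + 1 := by
    have := hj; rw [List.length_take] at this; omega
  refine ⟨j, hjlen, ?_, hN⟩
  rcases Nat.lt_or_ge j k with h | h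
  · exact h
  · exfalso
    have : j = k := by omega
    subst this
    rw [hN] at hS
    exact absurd hS (by decide)

lemma key_arm : ((armVals w).sort (· ≤ ·)).getD 1 0 < swIdx w + 3 := by
  obtain ⟨hlt, hsw⟩ := swIdx_spec hw
  rcases hsw with hS | hW
  · have hSm : Step.S ∈ w := List.mem_iff_getElem.2 ⟨swIdx w, hlt, hS⟩
    have h2 : (2 : ℕ) ∈ armVals w := mem_armVals.2 (Or.inr (Or.inl ⟨hSm, rfl⟩))
    have := SortH.getD_one_le h2 (by omega) one_mem_armVals armVals_ge1
    omega
  · obtain ⟨j, hjlen, hjk, hE⟩ := exists_E_before hw hlt hW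
    have hj3 : j + 3 ∈ armVals w := mem_armVals.2 (Or.inr (Or.inr ⟨j, mem_eSet.2 ⟨hjlen, hE⟩, rfl⟩))
    have := SortH.getD_one_le hj3 (by omega) one_mem_armVals armVals_ge1
    omega

lemma key_leg : ((legVals w).sort (· ≤ ·)).getD 1 0 < swIdx w + 3 := by
  obtain ⟨hlt, hsw⟩ := swIdx_spec hw
  rcases hsw with hS | hW
  · obtain ⟨j, hjlen, hjk, hN⟩ := exists_N_before hw hlt hS
    have hj3 : j + 3 ∈ legVals w := mem_legVals.2 (Or.inr (Or.inr ⟨j, mem_nSet.2 ⟨hjlen, hN⟩, rfl⟩))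
    have := SortH.getD_one_le hj3 (by omega) one_mem_legVals legVals_ge1
    omega
  · have hWm : Step.W ∈ w := List.mem_iff_getElem.2 ⟨swIdx w, hlt, hW⟩
    have h2 : (2 : ℕ) ∈ legVals w := mem_legVals.2 (Or.inr (Or.inl ⟨hWm, rfl⟩))
    have := SortH.getD_one_le h2 (by omega) one_mem_legVals legVals_ge1
    omega

end KeyLemmas
section IsSYTPhi
variable {n : ℕ} {w : List Step} (hw : IsPath n w)
include hw

lemma phi_arm_mem {j : ℕ} (hj : j ≤ n + 1) : phi n w (0, j) ∈ armVals w := by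
  rw [phi_arm hj]
  exact SortH.getD_mem (by rw [card_armVals hw]; omega)

lemma phi_leg_mem {i : ℕ} (h1 : 1 ≤ i) (hi : i ≤ n + 1) : phi n w (i, 0) ∈ legVals w := by
  rw [phi_leg h1 hi]
  exact SortH.getD_mem (by rw [card_legVals hw]; omega)

lemma swIdx_lt : swIdx w < 2 * n + 2 := by
  obtain ⟨hlt, -⟩ := swIdx_spec hw
  rw [hw.1] at hlt
  exact hlt

lemma isSYT_phi : IsSYT n (phi n w) := by
  have hcA : (armVals w).card = n + 2 := card_armVals hw
  have hcL : (legVals w).card = n + 2 := card_legVals hw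
  refine ⟨phi_zero_outside, ⟨?_, ?_, ?_⟩, ?_, ?_⟩
  · -- MapsTo
    rintro ⟨c1, c2⟩ hc
    rcases hc with ⟨hc1, hc2⟩ | heq | ⟨hc1, hc2, hc3⟩
    · simp only at hc1 hc2; subst hc1
      have hm := phi_arm_mem hw hc2
      exact ⟨armVals_ge1 _ hm, armVals_le hw _ hm⟩
    · rw [Prod.ext_iff] at heq
      obtain ⟨e1, e2⟩ := heq
      simp only at e1 e2; subst e1; subst e2
      rw [phi_heart]
      have := swIdx_lt hw
      exact ⟨by omega, by omega⟩
    · simp only at hc1 hc2 hc3; subst hc1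
      have hm := phi_leg_mem hw hc2 hc3
      exact ⟨legVals_ge1 _ hm, legVals_le hw _ hm⟩
  · -- InjOn
    rintro ⟨c1, c2⟩ hc ⟨d1, d2⟩ hd he
    rcases hc with ⟨hc1, hc2⟩ | heqc | ⟨hc1, hc2, hc3⟩
    all_goals rcases hd with ⟨hd1, hd2⟩ | heqd | ⟨hd1, hd2, hd3⟩
    -- arm, arm
    · simp only at hc1 hc2 hd1 hd2; subst hc1; subst hd1
      rw [phi_arm hc2, phi_arm hd2] at he
      rcases lt_trichotomy c2 d2 with h | h | h
      · exact absurd he (by have := SortH.getD_strictMono (s := armVals w) h (by omega); omega)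
      · rw [h]
      · exact absurd he (by have := SortH.getD_strictMono (s := armVals w) h (by omega); omega)
    -- arm, heart
    · simp only at hc1 hc2; subst hc1
      rw [Prod.ext_iff] at heqd
      obtain ⟨e1, e2⟩ := heqd; simp only at e1 e2; subst e1; subst e2
      rw [phi_heart] at he
      exact absurd (he ▸ phi_arm_mem hw hc2) (swv_not_arm hw)
    -- arm, leg
    · simp only at hc1 hc2 hd1 hd2 hd3; subst hc1; subst hd1
      have hmA := phi_arm_mem hw hc2
      have hmL := phi_leg_mem hw hd2 hd3
      have h1 : phi n w (0, c2) = 1 := arm_inter_leg hw hmA (he ▸ hmL)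
      rw [phi_leg hd2 hd3] at he
      have h0 : ((legVals w).sort (· ≤ ·)).getD 0 0 = 1 :=
        SortH.getD_zero one_mem_legVals legVals_ge1
      have := SortH.getD_strictMono (s := legVals w) (show 0 < d1 from hd2) (by omega)
      omega
    -- heart, arm
    · rw [Prod.ext_iff] at heqc
      obtain ⟨e1, e2⟩ := heqc; simp only at e1 e2; subst e1; subst e2
      simp only at hd1 hd2; subst hd1
      rw [phi_heart] at he
      exact absurd (he ▸ phi_arm_mem hw hd2) (swv_not_arm hw)
    -- heart, heart
    · rw [Prod.ext_iff] at heqc heqd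
      obtain ⟨e1, e2⟩ := heqc; obtain ⟨f1, f2⟩ := heqd
      simp only at e1 e2 f1 f2; subst e1; subst e2; subst f1; subst f2; rfl
    -- heart, leg
    · rw [Prod.ext_iff] at heqc
      obtain ⟨e1, e2⟩ := heqc; simp only at e1 e2; subst e1; subst e2
      simp only at hd1 hd2 hd3; subst hd1
      rw [phi_heart] at he
      exact absurd (he ▸ phi_leg_mem hw hd2 hd3) (swv_not_leg hw)
    -- leg, arm
    · simp only at hc1 hc2 hc3 hd1 hd2; subst hc1; subst hd1
      have hmL := phi_leg_mem hw hc2 hc3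
      have hmA := phi_arm_mem hw hd2
      have h1 : phi n w (c1, 0) = 1 := arm_inter_leg hw (he ▸ hmA) hmL
      rw [phi_leg hc2 hc3] at h1
      have h0 : ((legVals w).sort (· ≤ ·)).getD 0 0 = 1 :=
        SortH.getD_zero one_mem_legVals legVals_ge1
      have := SortH.getD_strictMono (s := legVals w) (show 0 < c1 from hc2) (by omega)
      omega
    -- leg, heart
    · simp only at hc1 hc2 hc3; subst hc1
      rw [Prod.ext_iff] at heqd
      obtain ⟨e1, e2⟩ := heqd; simp only at e1 e2; subst e1; subst e2
      rw [phi_heart] at he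
      exact absurd (he ▸ phi_leg_mem hw hc2 hc3) (swv_not_leg hw)
    -- leg, leg
    · simp only at hc1 hc2 hc3 hd1 hd2 hd3; subst hc1; subst hd1
      rw [phi_leg hc2 hc3, phi_leg hd2 hd3] at he
      rcases lt_trichotomy c1 d1 with h | h | h
      · exact absurd he (by have := SortH.getD_strictMono (s := legVals w) h (by omega); omega)
      · rw [h]
      · exact absurd he (by have := SortH.getD_strictMono (s := legVals w) h (by omega); omega)
  · -- SurjOn
    intro m hm
    obtain ⟨hm1, hm2⟩ := Set.mem_Icc.1 hm
    rcases Nat.lt_or_ge m 3 with hm3 | hm3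
    · rcases Nat.eq_or_lt_of_le hm1 with h1 | h1
      · -- m = 1
        exact ⟨(0, 0), arm_mem_cells (by omega), by rw [phi_00]; omega⟩
      · -- m = 2
        have hm2' : m = 2 := by omega
        subst hm2'
        rcases sw_split hw with ⟨hS, -⟩ | ⟨hW, -⟩
        · have h2 : (2 : ℕ) ∈ armVals w := mem_armVals.2 (Or.inr (Or.inl ⟨hS, rfl⟩))
          obtain ⟨i, hi, he⟩ := SortH.getD_surj h2
          rw [hcA] at hi
          exact ⟨(0, i), arm_mem_cells (by omega), by rw [phi_arm (by omega)]; exact he⟩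
        · have h2 : (2 : ℕ) ∈ legVals w := mem_legVals.2 (Or.inr (Or.inl ⟨hW, rfl⟩))
          obtain ⟨i, hi, he⟩ := SortH.getD_surj h2
          rw [hcL] at hi
          have hi1 : 1 ≤ i := by
            rcases Nat.eq_zero_or_pos i with rfl | h
            · rw [SortH.getD_zero one_mem_legVals legVals_ge1] at he; omega
            · exact h
          exact ⟨(i, 0), leg_mem_cells hi1 (by omega), by rw [phi_leg hi1 (by omega)]; exact he⟩
    · -- m ≥ 3
      set k := m - 3 with hkdef
      have hklen : k < w.length := by rw [hw.1]; omega
      have hm3' : m = k + 3 := by omega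
      cases hstep : w[k] with
      | E =>
        have hmem : m ∈ armVals w :=
          mem_armVals.2 (Or.inr (Or.inr ⟨k, mem_eSet.2 ⟨hklen, hstep⟩, by omega⟩))
        obtain ⟨i, hi, he⟩ := SortH.getD_surj hmem
        rw [hcA] at hi
        exact ⟨(0, i), arm_mem_cells (by omega), by rw [phi_arm (by omega)]; exact he⟩
      | N =>
        have hmem : m ∈ legVals w :=
          mem_legVals.2 (Or.inr (Or.inr ⟨k, mem_nSet.2 ⟨hklen, hstep⟩, by omega⟩))
        obtain ⟨i, hi, he⟩ := SortH.getD_surj hmem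
        rw [hcL] at hi
        have hi1 : 1 ≤ i := by
          rcases Nat.eq_zero_or_pos i with rfl | h
          · rw [SortH.getD_zero one_mem_legVals legVals_ge1] at he; omega
          · exact h
        exact ⟨(i, 0), leg_mem_cells hi1 (by omega), by rw [phi_leg hi1 (by omega)]; exact he⟩
      | S =>
        have := swIdx_eq hw hklen (Or.inl hstep)
        exact ⟨(1, 1), heart_mem_cells, by rw [phi_heart]; omega⟩
      | W =>
        have := swIdx_eq hw hklen (Or.inr hstep)
        exact ⟨(1, 1), heart_mem_cells, by rw [phi_heart]; omega⟩
  · -- rows increasing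
    rintro ⟨c1, c2⟩ hc ⟨d1, d2⟩ hd hrow hlt
    simp only at hrow hlt
    rcases hc with ⟨hc1, hc2⟩ | heqc | ⟨hc1, hc2, hc3⟩
    · -- c in arm
      simp only at hc1 hc2; subst hc1
      rcases hd with ⟨hd1, hd2⟩ | heqd | ⟨hd1, hd2, hd3⟩
      · simp only at hd1 hd2; subst hd1
        rw [phi_arm hc2, phi_arm hd2]
        exact SortH.getD_strictMono hlt (by omega)
      · rw [Prod.ext_iff] at heqd
        obtain ⟨e1, e2⟩ := heqd; simp only at e1 e2
        omega
      · simp only at hd1 hd2 hd3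
        omega
    · rw [Prod.ext_iff] at heqc
      obtain ⟨e1, e2⟩ := heqc; simp only at e1 e2; subst e1; subst e2
      rcases hd with ⟨hd1, hd2⟩ | heqd | ⟨hd1, hd2, hd3⟩
      · simp only at hd1 hd2; omega
      · rw [Prod.ext_iff] at heqd
        obtain ⟨e1, e2⟩ := heqd; simp only at e1 e2; omega
      · simp only at hd1 hd2 hd3; omega
    · -- c in leg
      simp only at hc1 hc2 hc3; subst hc1
      rcases hd with ⟨hd1, hd2⟩ | heqd | ⟨hd1, hd2, hd3⟩
      · simp only at hd1 hd2; omega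
      · rw [Prod.ext_iff] at heqd
        obtain ⟨e1, e2⟩ := heqd; simp only at e1 e2; subst e1; subst e2
        -- c = (1,0), d = (1,1)
        have hc1' : c1 = 1 := hrow
        subst hc1'
        rw [phi_heart, phi_leg hc2 hc3]
        exact key_leg hw
      · simp only at hd1 hd2 hd3; omega
  · -- columns increasing
    rintro ⟨c1, c2⟩ hc ⟨d1, d2⟩ hd hcol hlt
    simp only at hcol hlt
    rcases hc with ⟨hc1, hc2⟩ | heqc | ⟨hc1, hc2, hc3⟩
    · -- c in arm, c1 = 0
      simp only at hc1 hc2; subst hc1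
      rcases hd with ⟨hd1, hd2⟩ | heqd | ⟨hd1, hd2, hd3⟩
      · simp only at hd1 hd2; omega
      · rw [Prod.ext_iff] at heqd
        obtain ⟨e1, e2⟩ := heqd; simp only at e1 e2; subst e1; subst e2
        -- c = (0,1), d = (1,1)
        have hc2' : c2 = 1 := hcol
        subst hc2'
        rw [phi_heart, phi_arm hc2]
        exact key_arm hw
      · simp only at hd1 hd2 hd3; subst hd1
        -- c = (0,0), d = (d1, 0), d1 ≥ 1
        have hc2' : c2 = 0 := hcol
        subst hc2'
        rw [phi_00, phi_leg hd2 hd3]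
        have h0 : ((legVals w).sort (· ≤ ·)).getD 0 0 = 1 :=
          SortH.getD_zero one_mem_legVals legVals_ge1
        have := SortH.getD_strictMono (s := legVals w) (show 0 < d1 from hd2) (by omega)
        omega
    · rw [Prod.ext_iff] at heqc
      obtain ⟨e1, e2⟩ := heqc; simp only at e1 e2; subst e1; subst e2
      rcases hd with ⟨hd1, hd2⟩ | heqd | ⟨hd1, hd2, hd3⟩
      · simp only at hd1 hd2; omega
      · rw [Prod.ext_iff] at heqd
        obtain ⟨e1, e2⟩ := heqd; simp only at e1 e2; omega
      · simp only at hd1 hd2 hd3; omega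
    · -- c in leg
      simp only at hc1 hc2 hc3; subst hc1
      rcases hd with ⟨hd1, hd2⟩ | heqd | ⟨hd1, hd2, hd3⟩
      · simp only at hd1 hd2; subst hd1; omega
      · rw [Prod.ext_iff] at heqd
        obtain ⟨e1, e2⟩ := heqd; simp only at e1 e2; omega
      · simp only at hd1 hd2 hd3; subst hd1
        rw [phi_leg hc2 hc3, phi_leg hd2 hd3]
        exact SortH.getD_strictMono hlt (by omega)
end IsSYTPhi
section PsiPhi
variable {n : ℕ} {w : List Step} (hw : IsPath n w)
include hw

lemma psi_phi : psi n (phi n w) = w := by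
  have hsy : IsSYT n (phi n w) := isSYT_phi hw
  apply List.ext_getElem (by rw [psi_length, hw.1])
  intro k h1 h2
  rw [psi_getElem]
  have hk : k < 2 * n + 2 := by rw [psi_length] at h1; exact h1
  have hklen : k < w.length := h2
  cases hstep : w[k] with
  | E =>
    exact (letter_eq_E (n := n) (T := phi n w)).2
      ((InArm_phi hw).2 (mem_armVals.2 (Or.inr (Or.inr ⟨k, mem_eSet.2 ⟨hklen, hstep⟩, rfl⟩))))
  | N =>
    exact (letter_eq_N hsy).2
      ((InLeg_phi hw).2 (mem_legVals.2 (Or.inr (Or.inr ⟨k, mem_nSet.2 ⟨hklen, hstep⟩, rfl⟩))))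
  | S =>
    have hsi := swIdx_eq hw hklen (Or.inl hstep)
    have hSm : Step.S ∈ w := List.mem_iff_getElem.2 ⟨k, hklen, hstep⟩
    refine (letter_eq_S hsy).2 ⟨?_, ?_⟩
    · rw [InHeart, phi_heart, hsi]
    · exact (InArm_phi hw).2 (mem_armVals.2 (Or.inr (Or.inl ⟨hSm, rfl⟩)))
  | W =>
    have hsi := swIdx_eq hw hklen (Or.inr hstep)
    have hWm : Step.W ∈ w := List.mem_iff_getElem.2 ⟨k, hklen, hstep⟩
    refine (letter_eq_W hsy hk).2 ⟨?_, ?_⟩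
    · rw [InHeart, phi_heart, hsi]
    · exact (InLeg_phi hw).2 (mem_legVals.2 (Or.inr (Or.inl ⟨hWm, rfl⟩)))

end PsiPhi

section PhiPsi
variable {n : ℕ} {T : ℕ × ℕ → ℕ} (hT : IsSYT n T)
include hT

lemma S_mem_psi : Step.S ∈ psi n T ↔ InArm n T 2 := by
  constructor
  · intro h
    obtain ⟨k, hk, he⟩ := List.mem_iff_getElem.1 h
    rw [psi_getElem] at he
    exact ((letter_eq_S hT).1 he).2
  · intro h2a
    have h3 := heart_ge3 hT
    have h4 := (T_mem_Icc hT heart_mem_cells).2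
    have hk : T (1, 1) - 3 < (psi n T).length := by rw [psi_length]; omega
    refine List.mem_iff_getElem.2 ⟨T (1, 1) - 3, hk, ?_⟩
    rw [psi_getElem]
    exact (letter_eq_S hT).2 ⟨by rw [InHeart]; omega, h2a⟩

lemma W_mem_psi : Step.W ∈ psi n T ↔ InLeg n T 2 := by
  constructor
  · intro h
    obtain ⟨k, hk, he⟩ := List.mem_iff_getElem.1 h
    have hk2 : k < 2 * n + 2 := by rw [psi_length] at hk; exact hk
    rw [psi_getElem] at he
    exact ((letter_eq_W hT hk2).1 he).2
  · intro h2l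
    have h3 := heart_ge3 hT
    have h4 := (T_mem_Icc hT heart_mem_cells).2
    have hk : T (1, 1) - 3 < (psi n T).length := by rw [psi_length]; omega
    refine List.mem_iff_getElem.2 ⟨T (1, 1) - 3, hk, ?_⟩
    rw [psi_getElem]
    exact (letter_eq_W hT (by rw [psi_length] at hk; exact hk)).2 ⟨by rw [InHeart]; omega, h2l⟩

lemma eSet_psi {k : ℕ} : k ∈ eSet (psi n T) ↔ k < 2 * n + 2 ∧ InArm n T (k + 3) := by
  rw [mem_eSet]
  constructor
  · rintro ⟨hk, he⟩
    rw [psi_getElem] at he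
    exact ⟨by rw [psi_length] at hk; exact hk, (letter_eq_E (n := n)).1 he⟩
  · rintro ⟨hk, ha⟩
    have hk' : k < (psi n T).length := by rw [psi_length]; exact hk
    exact ⟨hk', by rw [psi_getElem]; exact (letter_eq_E (n := n)).2 ha⟩

lemma nSet_psi {k : ℕ} : k ∈ nSet (psi n T) ↔ k < 2 * n + 2 ∧ InLeg n T (k + 3) := by
  rw [mem_nSet]
  constructor
  · rintro ⟨hk, he⟩
    rw [psi_getElem] at he
    exact ⟨by rw [psi_length] at hk; exact hk, (letter_eq_N hT).1 he⟩
  · rintro ⟨hk, ha⟩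
    have hk' : k < (psi n T).length := by rw [psi_length]; exact hk
    exact ⟨hk', by rw [psi_getElem]; exact (letter_eq_N hT).2 ha⟩

lemma armVals_psi : armVals (psi n T) = armF n T := by
  ext m
  rw [mem_armVals, mem_armF]
  constructor
  · rintro (rfl | ⟨hS, rfl⟩ | ⟨k, hk, rfl⟩)
    · exact ⟨0, by omega, T00 hT⟩
    · exact (S_mem_psi hT).1 hS
    · exact (eSet_psi hT).1 hk |>.2
  · intro ha
    obtain ⟨j, hj, he⟩ := ha
    have hb := T_mem_Icc hT (arm_mem_cells hj)
    rw [he] at hb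
    rcases Nat.lt_or_ge m 3 with hm | hm
    · rcases Nat.eq_or_lt_of_le hb.1 with h1 | h1
      · exact Or.inl h1.symm
      · have : m = 2 := by omega
        subst this
        exact Or.inr (Or.inl ⟨(S_mem_psi hT).2 ⟨j, hj, he⟩, rfl⟩)
    · refine Or.inr (Or.inr ⟨m - 3, (eSet_psi hT).2 ⟨by omega, ?_⟩, by omega⟩)
      have : m - 3 + 3 = m := by omega
      rw [this]
      exact ⟨j, hj, he⟩

lemma legVals_psi : legVals (psi n T) = legF n T := by
  ext m
  rw [mem_legVals, mem_legF]
  constructor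
  · rintro (rfl | ⟨hW, rfl⟩ | ⟨k, hk, rfl⟩)
    · exact ⟨0, by omega, T00 hT⟩
    · exact (W_mem_psi hT).1 hW
    · exact (nSet_psi hT).1 hk |>.2
  · intro ha
    obtain ⟨i, hi, he⟩ := ha
    have hb := T_mem_Icc hT (col_mem_cells hi)
    rw [he] at hb
    rcases Nat.lt_or_ge m 3 with hm | hm
    · rcases Nat.eq_or_lt_of_le hb.1 with h1 | h1
      · exact Or.inl h1.symm
      · have : m = 2 := by omega
        subst this
        exact Or.inr (Or.inl ⟨(W_mem_psi hT).2 ⟨i, hi, he⟩, rfl⟩)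
    · refine Or.inr (Or.inr ⟨m - 3, (nSet_psi hT).2 ⟨by omega, ?_⟩, by omega⟩)
      have : m - 3 + 3 = m := by omega
      rw [this]
      exact ⟨i, hi, he⟩

lemma swIdx_psi : swIdx (psi n T) = T (1, 1) - 3 := by
  have h3 := heart_ge3 hT
  have h4 := (T_mem_Icc hT heart_mem_cells).2
  have hk : T (1, 1) - 3 < (psi n T).length := by rw [psi_length]; omega
  have hheart : InHeart T (T (1, 1) - 3 + 3) := by rw [InHeart]; omega
  have hk2 : T (1, 1) - 3 < 2 * n + 2 := by rw [psi_length] at hk; exact hk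
  rcases two_arm_or_leg hT with h2a | h2l
  · refine swIdx_eq (psi_isPath hT) hk (Or.inl ?_)
    rw [psi_getElem]
    exact (letter_eq_S hT).2 ⟨hheart, h2a⟩
  · refine swIdx_eq (psi_isPath hT) hk (Or.inr ?_)
    rw [psi_getElem]
    exact (letter_eq_W hT hk2).2 ⟨hheart, h2l⟩

lemma enum_arm : ∀ j ≤ n + 1, ((armF n T).sort (· ≤ ·)).getD j 0 = T (0, j) := by
  have hsort : (armF n T).sort (· ≤ ·) = List.ofFn (fun j : Fin (n + 2) => T (0, j.val)) := by
    haveI : IsAntisymm ℕ (· < ·) := ⟨fun a b h1 h2 => absurd h2 (not_lt.2 (le_of_lt h1))⟩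
    refine (fun hp h1 h2 => List.Perm.eq_of_pairwise' (r := (· < ·)) h1 h2 hp) ?_ ?_ ?_
    · apply List.perm_of_nodup_nodup_toFinset_eq (Finset.sort_nodup _ _)
      · rw [List.nodup_ofFn]
        intro a b he
        have hmono : StrictMono (fun j : Fin (n + 2) => T (0, j.val)) := by
          intro a b hab
          exact row0_lt hT (by omega) hab
        exact hmono.injective he
      · rw [Finset.sort_toFinset]
        ext m
        rw [List.mem_toFinset, List.mem_ofFn, mem_armF]
        constructor
        · rintro ⟨j, hj, he⟩
          exact ⟨⟨j, by omega⟩, he⟩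
        · rintro ⟨j, rfl⟩
          exact ⟨j.val, by omega, rfl⟩
    · exact (Finset.sortedLT_sort _).pairwise
    · rw [← List.sortedLT_iff_pairwise, List.sortedLT_ofFn_iff]
      intro a b hab
      exact row0_lt hT (by omega) hab
  intro j hj
  rw [hsort, List.getD_eq_getElem _ _ (by rw [List.length_ofFn]; omega), List.getElem_ofFn]

lemma enum_leg : ∀ i ≤ n + 1, ((legF n T).sort (· ≤ ·)).getD i 0 = T (i, 0) := by
  have hsort : (legF n T).sort (· ≤ ·) = List.ofFn (fun i : Fin (n + 2) => T (i.val, 0)) := by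
    haveI : IsAntisymm ℕ (· < ·) := ⟨fun a b h1 h2 => absurd h2 (not_lt.2 (le_of_lt h1))⟩
    refine (fun hp h1 h2 => List.Perm.eq_of_pairwise' (r := (· < ·)) h1 h2 hp) ?_ ?_ ?_
    · apply List.perm_of_nodup_nodup_toFinset_eq (Finset.sort_nodup _ _)
      · rw [List.nodup_ofFn]
        have hmono : StrictMono (fun i : Fin (n + 2) => T (i.val, 0)) := by
          intro a b hab
          exact col0_lt hT (by omega) hab
        exact hmono.injective
      · rw [Finset.sort_toFinset]
        ext m
        rw [List.mem_toFinset, List.mem_ofFn, mem_legF]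
        constructor
        · rintro ⟨i, hi, he⟩
          exact ⟨⟨i, by omega⟩, he⟩
        · rintro ⟨i, rfl⟩
          exact ⟨i.val, by omega, rfl⟩
    · exact (Finset.sortedLT_sort _).pairwise
    · rw [← List.sortedLT_iff_pairwise, List.sortedLT_ofFn_iff]
      intro a b hab
      exact col0_lt hT (by omega) hab
  intro i hi
  rw [hsort, List.getD_eq_getElem _ _ (by rw [List.length_ofFn]; omega), List.getElem_ofFn]

lemma phi_psi : phi n (psi n T) = T := by
  funext c
  by_cases hc : c ∈ cells n
  · obtain ⟨c1, c2⟩ := c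
    rcases hc with ⟨h1, h2⟩ | heq | ⟨h1, h2, h3⟩
    · simp only at h1 h2; subst h1
      rw [phi_arm h2, armVals_psi hT, enum_arm hT c2 h2]
    · rw [Prod.ext_iff] at heq
      obtain ⟨e1, e2⟩ := heq; simp only at e1 e2; subst e1; subst e2
      rw [phi_heart, swIdx_psi hT]
      have := heart_ge3 hT
      omega
    · simp only at h1 h2 h3; subst h1
      rw [phi_leg h2 h3, legVals_psi hT, enum_leg hT c1 h3]
  · rw [phi_zero_outside c hc, hT.1 c hc]

end PhiPsi

/-- The map `ψ` is a bijection from `SYT(θ⁽ⁿ⁾)` onto `𝒫ₙ`. -/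
theorem psi_bijective (n : ℕ) :
    Set.BijOn (psi n) {T : ℕ × ℕ → ℕ | IsSYT n T} {w : List Step | IsPath n w} := by
  refine ⟨?_, ?_, ?_⟩
  · intro T hT
    exact psi_isPath hT
  · intro T1 h1 T2 h2 he
    rw [← phi_psi h1, ← phi_psi h2, he]
  · intro w hw
    exact ⟨phi n w, isSYT_phi hw, psi_phi hw⟩
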